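/- Let Z = [z̲*, z̄*] ⊂ ℝ^{n_z} be a closed box (interval) and μ : Z → ℝ^p be differentiable on Z and Jacobian sign-stable with sign pattern σ ∈ {−1,+1}^{p×n_z}, i.e., σ_{ij}·∂μ_i/∂z_j(z) ≥ 0 for all z ∈ Z and all (i,j). For each i ∈ {1,…,p} define the binary diagonal matrix D^i ∈ ℝ^{n_z×n_z} by D^i_{jj} = 1 if σ_{ij} = +1 and D^i_{jj} = 0 otherwise, and define μ_d : Z × Z → ℝ^p componentwise by μ_{d,i}(z₁,z₂) := μ_i(D^i z₁ + (I − D^i) z₂). Then μ_d is a decomposition function for μ: (i) μ_d(z,z) = μ(z) for all z ∈ Z; (ii) if z₁ ≤ ẑ₁ (all points in Z) then μ_d(z₁,z₂) ≤ μ_d(ẑ₁,z₂); (iii) if z₂ ≤ ẑ₂ then μ_d(z₁,ẑ₂) ≤ μ_d(z₁,z₂). Consequently, whenever z̲ ≤ z ≤ z̄ with z̲, z̄ ∈ Z, it holds that μ_d(z̲,z̄) ≤ μ(z) ≤ μ_d(z̄,z̲). -/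

import Mathlib

open Matrix

/-- Core: if along every coordinate the increment times partial derivative is
nonnegative throughout the box, then the i-th component increases from a to b. -/
lemma jss_core {nz p : ℕ} (zls zus : Fin nz → ℝ)
    (μ : (Fin nz → ℝ) → (Fin p → ℝ))
    (J : (Fin nz → ℝ) → ((Fin nz → ℝ) →L[ℝ] (Fin p → ℝ)))
    (hdiff : ∀ z ∈ Set.Icc zls zus, HasFDerivWithinAt μ (J z) (Set.Icc zls zus) z)
    (a b : Fin nz → ℝ) (ha : a ∈ Set.Icc zls zus) (hb : b ∈ Set.Icc zls zus)
    (i : Fin p)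
    (h : ∀ z ∈ Set.Icc zls zus, ∀ j, 0 ≤ (b j - a j) * J z (Pi.single j 1) i) :
    μ a i ≤ μ b i := by
  set γ : ℝ → (Fin nz → ℝ) := fun t => a + t • (b - a) with hγdef
  have hconv : Convex ℝ (Set.Icc zls zus) := convex_Icc _ _
  have hγmem : ∀ t ∈ Set.Icc (0:ℝ) 1, γ t ∈ Set.Icc zls zus := by
    intro t ht
    have := hconv ha hb (a := 1 - t) (b := t) (by linarith [ht.2]) ht.1 (by ring)
    have heq : (1 - t) • a + t • b = γ t := by
      simp only [hγdef]
      module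
    rwa [heq] at this
  -- expansion of directional derivative
  have hexp : ∀ z, J z (b - a) i = ∑ j, (b j - a j) * J z (Pi.single j 1) i := by
    intro z
    have hba : (b - a) = ∑ j, (b j - a j) • (Pi.single j 1 : Fin nz → ℝ) := by
      funext k
      simp [Pi.single_apply, Finset.sum_ite_eq' (Finset.univ) k]
    rw [hba]
    simp [Finset.sum_apply]
  -- derivative of g
  set g : ℝ → ℝ := fun t => μ (γ t) i with hgdef
  have hgderiv : ∀ t ∈ Set.Icc (0:ℝ) 1,
      HasDerivWithinAt g (J (γ t) (b - a) i) (Set.Icc (0:ℝ) 1) t := by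
    intro t ht
    have hγd : HasDerivWithinAt γ (b - a) (Set.Icc (0:ℝ) 1) t := by
      have h1 : HasDerivAt (fun s : ℝ => a + s • (b - a)) ((1:ℝ) • (b - a)) t :=
        ((hasDerivAt_id t).smul_const (b - a)).const_add a
      have h2 := h1.hasDerivWithinAt (s := Set.Icc (0:ℝ) 1)
      rw [one_smul] at h2
      exact h2
    have hcomp : HasDerivWithinAt (fun t => μ (γ t)) (J (γ t) (b - a))
        (Set.Icc (0:ℝ) 1) t :=
      (hdiff (γ t) (hγmem t ht)).comp_hasDerivWithinAt t hγd hγmem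
    have := (ContinuousLinearMap.proj (R := ℝ) (φ := fun _ : Fin p => ℝ) i).hasFDerivAt.comp_hasDerivWithinAt t hcomp
    exact this
  have hmono : MonotoneOn g (Set.Icc (0:ℝ) 1) := by
    apply monotoneOn_of_hasDerivWithinAt_nonneg (convex_Icc 0 1)
      (f' := fun t => J (γ t) (b - a) i)
    · intro t ht
      exact (hgderiv t ht).continuousWithinAt
    · intro t ht
      have ht' : t ∈ Set.Icc (0:ℝ) 1 := interior_subset ht
      exact (hgderiv t ht').mono interior_subset
    · intro t ht
      have ht' : t ∈ Set.Icc (0:ℝ) 1 := interior_subset ht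
      rw [hexp]
      exact Finset.sum_nonneg fun j _ => h (γ t) (hγmem t ht') j
  have h01 := hmono (Set.left_mem_Icc.2 zero_le_one) (Set.right_mem_Icc.2 zero_le_one)
    zero_le_one
  have hg0 : g 0 = μ a i := by simp [hgdef, hγdef]
  have hg1 : g 1 = μ b i := by simp [hgdef, hγdef]
  rwa [hg0, hg1] at h01

/-- Tight decomposition functions for JSS mappings on a box. -/
theorem jss_tight_decomposition_function {nz p : ℕ}
    (zls zus : Fin nz → ℝ) (hbox : zls ≤ zus)
    (μ : (Fin nz → ℝ) → (Fin p → ℝ))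
    (J : (Fin nz → ℝ) → ((Fin nz → ℝ) →L[ℝ] (Fin p → ℝ)))
    (hdiff : ∀ z ∈ Set.Icc zls zus, HasFDerivWithinAt μ (J z) (Set.Icc zls zus) z)
    (σ : Fin p → Fin nz → ℝ)
    (hσ : ∀ i j, σ i j = 1 ∨ σ i j = -1)
    (hJSS : ∀ z ∈ Set.Icc zls zus, ∀ (i : Fin p) (j : Fin nz),
      0 ≤ σ i j * J z (Pi.single j 1) i)
    (μd : (Fin nz → ℝ) → (Fin nz → ℝ) → (Fin p → ℝ))
    (hμd : ∀ z₁ z₂ (i : Fin p),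
      μd z₁ z₂ i = μ (fun j => if σ i j = 1 then z₁ j else z₂ j) i) :
    (∀ z ∈ Set.Icc zls zus, μd z z = μ z) ∧
    (∀ z₁ z₁' z₂, z₁ ∈ Set.Icc zls zus → z₁' ∈ Set.Icc zls zus → z₂ ∈ Set.Icc zls zus →
      z₁ ≤ z₁' → μd z₁ z₂ ≤ μd z₁' z₂) ∧
    (∀ z₁ z₂ z₂', z₁ ∈ Set.Icc zls zus → z₂ ∈ Set.Icc zls zus → z₂' ∈ Set.Icc zls zus →
      z₂ ≤ z₂' → μd z₁ z₂' ≤ μd z₁ z₂) ∧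
    (∀ z zl zu, zl ∈ Set.Icc zls zus → zu ∈ Set.Icc zls zus →
      zl ≤ z → z ≤ zu → μd zl zu ≤ μ z ∧ μ z ≤ μd zu zl) := by
  -- selected points lie in the box
  have hsel : ∀ z₁ z₂, z₁ ∈ Set.Icc zls zus → z₂ ∈ Set.Icc zls zus → ∀ i,
      (fun j => if σ i j = 1 then z₁ j else z₂ j) ∈ Set.Icc zls zus := by
    intro z₁ z₂ h₁ h₂ i
    constructor <;> intro j <;> dsimp only <;> split
    · exact h₁.1 j
    · exact h₂.1 j
    · exact h₁.2 j
    · exact h₂.2 j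
  have hid : ∀ z ∈ Set.Icc zls zus, μd z z = μ z := by
    intro z _
    funext i
    rw [hμd]
    simp
  have hinc : ∀ z₁ z₁' z₂, z₁ ∈ Set.Icc zls zus → z₁' ∈ Set.Icc zls zus →
      z₂ ∈ Set.Icc zls zus → z₁ ≤ z₁' → μd z₁ z₂ ≤ μd z₁' z₂ := by
    intro z₁ z₁' z₂ h₁ h₁' h₂ hle i
    rw [hμd, hμd]
    refine jss_core zls zus μ J hdiff _ _ (hsel z₁ z₂ h₁ h₂ i) (hsel z₁' z₂ h₁' h₂ i) i ?_
    intro z hz j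
    rcases hσ i j with hs | hs
    · rw [if_pos hs, if_pos hs]
      have := hJSS z hz i j
      rw [hs, one_mul] at this
      exact mul_nonneg (sub_nonneg.2 (hle j)) this
    · rw [if_neg (by rw [hs]; norm_num), if_neg (by rw [hs]; norm_num)]
      simp
  have hdec : ∀ z₁ z₂ z₂', z₁ ∈ Set.Icc zls zus → z₂ ∈ Set.Icc zls zus →
      z₂' ∈ Set.Icc zls zus → z₂ ≤ z₂' → μd z₁ z₂' ≤ μd z₁ z₂ := by
    intro z₁ z₂ z₂' h₁ h₂ h₂' hle i
    rw [hμd, hμd]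
    refine jss_core zls zus μ J hdiff _ _ (hsel z₁ z₂' h₁ h₂' i) (hsel z₁ z₂ h₁ h₂ i) i ?_
    intro z hz j
    rcases hσ i j with hs | hs
    · rw [if_pos hs, if_pos hs]
      simp
    · rw [if_neg (by rw [hs]; norm_num), if_neg (by rw [hs]; norm_num)]
      have := hJSS z hz i j
      rw [hs] at this
      have hJ : J z (Pi.single j 1) i ≤ 0 := by linarith
      nlinarith [sub_nonpos.2 (hle j), hJ]
  refine ⟨hid, hinc, hdec, ?_⟩
  intro z zl zu hl hu hlz hzu
  have hz : z ∈ Set.Icc zls zus := ⟨le_trans hl.1 hlz, le_trans hzu hu.2⟩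
  constructor
  · calc μd zl zu ≤ μd z zu := hinc zl z zu hl hz hu hlz
    _ ≤ μd z z := hdec z z zu hz hz hu hzu
    _ = μ z := hid z hz
  · calc μ z = μd z z := (hid z hz).symm
    _ ≤ μd zu z := hinc z zu z hz hu hz hzu
    _ ≤ μd zu zl := hdec zu zl z hu hl hz hlz
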